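/- Suppose real numbers μ, a_1, …, a_14 are such that the 8 × 8 symmetric matrix G(μ, a_1, …, a_14) has rank at most 3, 0.6 ≤ μ ≤ 0.64759, and |a_j| < μ for all 1 ≤ j ≤ 14. Then a_11 = (1 − a_5 + μ − a_5 μ − 6μ²)/(2μ). -/

import Mathlib

/-- The `8 × 8` symmetric matrix `G(μ, a₁, …, a₁₄)` from the paper. -/
def packingGram (μ a1 a2 a3 a4 a5 a6 a7 a8 a9 a10 a11 a12 a13 a14 : ℝ) :
    Matrix (Fin 8) (Fin 8) ℝ :=
  !![1,  a1,  μ,  a2,  a3, -μ,  a4, -μ;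
     a1, 1,  -μ,  a5, -μ,  a6, -μ,  a7;
     μ, -μ,   1,   μ,  a8, -μ,  a9, a10;
     a2, a5,  μ,   1, a11, a12,  μ,   μ;
     a3, -μ, a8, a11,   1,   μ,  μ,  -μ;
     -μ, a6, -μ, a12,   μ,   1,  μ, a13;
     a4, -μ, a9,   μ,   μ,   μ,  1, a14;
     -μ, a7, a10,  μ,  -μ, a13, a14,  1]

set_option maxHeartbeats 1000000 in
/-- Determinant of an explicit `4 × 4` real matrix. -/
lemma step8_det4 (a b c d e f g h i j k l m n o p : ℝ) :
    (!![a,b,c,d; e,f,g,h; i,j,k,l; m,n,o,p]).det =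
      a*(f*(k*p-l*o) - g*(j*p-l*n) + h*(j*o-k*n))
      - b*(e*(k*p-l*o) - g*(i*p-l*m) + h*(i*o-k*m))
      + c*(e*(j*p-l*n) - f*(i*p-l*m) + h*(i*n-j*m))
      - d*(e*(j*o-k*n) - f*(i*o-k*m) + g*(i*n-j*m)) := by
  rw [Matrix.det_succ_row_zero]
  simp [Fin.sum_univ_succ, Matrix.det_fin_three, Fin.succAbove]
  ring

set_option maxHeartbeats 1000000 in
/-- Any `4 × 4` submatrix of a real `8 × 8` matrix of rank at most `3` is singular. -/
lemma step8_subdet {A : Matrix (Fin 8) (Fin 8) ℝ} (h : A.rank ≤ 3)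
    (f g : Fin 4 → Fin 8) : (A.submatrix f g).det = 0 := by
  by_contra hdet
  have hunit : IsUnit (A.submatrix f g) := by
    rw [Matrix.isUnit_iff_isUnit_det]
    exact isUnit_iff_ne_zero.mpr hdet
  have hrank4 : (A.submatrix f g).rank = 4 := by
    simpa using Matrix.rank_of_isUnit _ hunit
  have h1 : (A.submatrix f g) =
      ((1 : Matrix (Fin 8) (Fin 8) ℝ).submatrix f (Equiv.refl (Fin 8))) * A *
      ((1 : Matrix (Fin 8) (Fin 8) ℝ).submatrix (Equiv.refl (Fin 8)) g) := by
    rw [Matrix.one_submatrix_mul, Matrix.mul_submatrix_one]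
    simp
  have h2 : (A.submatrix f g).rank ≤ A.rank := by
    rw [h1]
    exact le_trans (Matrix.rank_mul_le_left _ _) (Matrix.rank_mul_le_right _ _)
  omega

set_option maxHeartbeats 4000000 in
/-- **Step 8.** Under the rank-3 and coherence conditions on `G`, the coefficient `a₁₁` is determined. -/
theorem step8
    (μ a1 a2 a3 a4 a5 a6 a7 a8 a9 a10 a11 a12 a13 a14 : ℝ)
    (hrank : (packingGram μ a1 a2 a3 a4 a5 a6 a7 a8 a9 a10 a11 a12 a13 a14).rank ≤ 3)
    (hμ1 : (0.6 : ℝ) ≤ μ) (hμ2 : μ ≤ 0.64759)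
    (h1 : |a1| < μ) (h2 : |a2| < μ) (h3 : |a3| < μ) (h4 : |a4| < μ) (h5 : |a5| < μ)
    (h6 : |a6| < μ) (h7 : |a7| < μ) (h8 : |a8| < μ) (h9 : |a9| < μ) (h10 : |a10| < μ)
    (h11 : |a11| < μ) (h12 : |a12| < μ) (h13 : |a13| < μ) (h14 : |a14| < μ) :
    a11 = (1 - a5 + μ - a5 * μ - 6 * μ ^ 2) / (2 * μ) := by
  have hμ0 : (0:ℝ) < μ := by linarith
  have hμ1' : μ < 1 := by linarith
  have h6' := abs_lt.mp h6
  have h11' := abs_lt.mp h11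
  -- arithmetic facts, established before the heavy hypotheses enter the context
  have pos1 : (0:ℝ) < 1 - μ := by linarith
  have pos2 : (0:ℝ) < a6 + 1 := by linarith [h6'.1]
  have pos3 : (0:ℝ) < 2*μ*(1-μ)^2*(1+2*μ) := by nlinarith [pow_pos pos1 2]
  have pos4 : (0:ℝ) < (1+μ)^2*(1+2*μ) := by nlinarith [pow_pos (show (0:ℝ) < 1+μ by linarith) 2]
  have pos5 : (0:ℝ) < (1-μ)*(1+μ)*(1+2*μ) := by nlinarith
  have hane : a11 - μ ≠ 0 := sub_ne_zero.mpr (ne_of_lt h11'.2)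
  have hw2pos : (0:ℝ) < (1 + 10*μ + 39*μ^2 + 68*μ^3 + 23*μ^4 - 102*μ^5 - 151*μ^6 - 40*μ^7 + 72*μ^8 + 64*μ^9 + 16*μ^10) := by
    have hu : μ ≤ 0.65 := by linarith
    have p2l : (0.36:ℝ) ≤ μ^2 := by nlinarith
    have p3l : (0.216:ℝ) ≤ μ^3 := by nlinarith
    have p4n : (0:ℝ) ≤ μ^4 := by positivity
    have p8n : (0:ℝ) ≤ μ^8 := by positivity
    have p9n : (0:ℝ) ≤ μ^9 := by positivity
    have p10n : (0:ℝ) ≤ μ^10 := by positivity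
    have p2u : μ^2 ≤ 0.4225 := by nlinarith
    have p3u : μ^3 ≤ 0.274625 := by nlinarith
    have p4u : μ^4 ≤ 0.17850625 := by nlinarith
    have p5u : μ^5 ≤ 0.1160290625 := by nlinarith
    have p6u : μ^6 ≤ 0.075418890625 := by nlinarith
    have p7u : μ^7 ≤ 0.04902227890625 := by nlinarith
    nlinarith
  -- the six vanishing 4 × 4 minors we use
  have h22 := step8_subdet hrank ![1,4,5,6] ![1,4,5,6]
  have h23 := step8_subdet hrank ![1,4,5,6] ![2,4,5,6]
  have h33 := step8_subdet hrank ![2,4,5,6] ![2,4,5,6]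
  have h44 := step8_subdet hrank ![3,4,5,6] ![3,4,5,6]
  have h34 := step8_subdet hrank ![2,4,5,6] ![3,4,5,6]
  have h24 := step8_subdet hrank ![1,4,5,6] ![3,4,5,6]
  rw [show (packingGram μ a1 a2 a3 a4 a5 a6 a7 a8 a9 a10 a11 a12 a13 a14).submatrix ![1,4,5,6] ![1,4,5,6]
      = !![1,-μ,a6,-μ; -μ,1,μ,μ; a6,μ,1,μ; -μ,μ,μ,1] from by
    ext i j; fin_cases i <;> fin_cases j <;> rfl, step8_det4] at h22
  rw [show (packingGram μ a1 a2 a3 a4 a5 a6 a7 a8 a9 a10 a11 a12 a13 a14).submatrix ![1,4,5,6] ![2,4,5,6]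
      = !![-μ,-μ,a6,-μ; a8,1,μ,μ; -μ,μ,1,μ; a9,μ,μ,1] from by
    ext i j; fin_cases i <;> fin_cases j <;> rfl, step8_det4] at h23
  rw [show (packingGram μ a1 a2 a3 a4 a5 a6 a7 a8 a9 a10 a11 a12 a13 a14).submatrix ![2,4,5,6] ![2,4,5,6]
      = !![1,a8,-μ,a9; a8,1,μ,μ; -μ,μ,1,μ; a9,μ,μ,1] from by
    ext i j; fin_cases i <;> fin_cases j <;> rfl, step8_det4] at h33
  rw [show (packingGram μ a1 a2 a3 a4 a5 a6 a7 a8 a9 a10 a11 a12 a13 a14).submatrix ![3,4,5,6] ![3,4,5,6]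
      = !![1,a11,a12,μ; a11,1,μ,μ; a12,μ,1,μ; μ,μ,μ,1] from by
    ext i j; fin_cases i <;> fin_cases j <;> rfl, step8_det4] at h44
  rw [show (packingGram μ a1 a2 a3 a4 a5 a6 a7 a8 a9 a10 a11 a12 a13 a14).submatrix ![2,4,5,6] ![3,4,5,6]
      = !![μ,a8,-μ,a9; a11,1,μ,μ; a12,μ,1,μ; μ,μ,μ,1] from by
    ext i j; fin_cases i <;> fin_cases j <;> rfl, step8_det4] at h34
  rw [show (packingGram μ a1 a2 a3 a4 a5 a6 a7 a8 a9 a10 a11 a12 a13 a14).submatrix ![1,4,5,6] ![3,4,5,6]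
      = !![a5,-μ,a6,-μ; a11,1,μ,μ; a12,μ,1,μ; μ,μ,μ,1] from by
    ext i j; fin_cases i <;> fin_cases j <;> rfl, step8_det4] at h24
  -- Step 1 : the value of a6
  have key22 : (1-μ)*((a6+1)*((1+μ)*a6 - (1+μ-4*μ^2))) = 0 := by linear_combination (-1)*h22
  have h22b : (a6+1)*((1+μ)*a6 - (1+μ-4*μ^2)) = 0 :=
    (mul_eq_zero.mp key22).resolve_left pos1.ne'
  have ha6 : (1+μ)*a6 - (1+μ-4*μ^2) = 0 :=
    (mul_eq_zero.mp h22b).resolve_left pos2.ne'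
  -- Step 2 : a8 + a9 = 0
  have key23 : (2*μ*(1-μ)^2*(1+2*μ))*(a8+a9) = 0 := by
    linear_combination (1+μ)*h23 - (μ + μ*a9 + μ*a8 - μ^2*a9 - μ^2*a8 - μ^3)*ha6
  have h89 : a8 + a9 = 0 := (mul_eq_zero.mp key23).resolve_left pos3.ne'
  -- Step 3 : the normalized equations P3, P1, P2, E24
  have key33 : (1-μ)*(-1 + 2*a8^2 - μ + 4*μ*a8^2 + 3*μ^2 + μ^3) = 0 := by
    linear_combination (-1)*h33 + (-a9 + a8 + 2*μ*a8 - 2*μ^2 + μ^2*a9 - 3*μ^2*a8 + 2*μ^3)*h89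
  have hP3 : (-1 + 2*a8^2 - μ + 4*μ*a8^2 + 3*μ^2 + μ^3) = (0:ℝ) := (mul_eq_zero.mp key33).resolve_left pos1.ne'
  have key44 : (1-μ)*(-1 + a12^2 + a11^2 - μ + μ*a12^2 - 2*μ*a11*a12 + μ*a11^2 + 3*μ^2 - 2*μ^2*a12 - 2*μ^2*a11 + μ^3) = 0 := by linear_combination (-1)*h44
  have hP1 : (-1 + a12^2 + a11^2 - μ + μ*a12^2 - 2*μ*a11*a12 + μ*a11^2 + 3*μ^2 - 2*μ^2*a12 - 2*μ^2*a11 + μ^3) = (0:ℝ) := (mul_eq_zero.mp key44).resolve_left pos1.ne'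
  have key34 : (1-μ)*(a11*a8 - μ - μ*a8 - μ*a12 + 2*μ*a11*a8 - μ^2 - 2*μ^2*a8 - μ^2*a12 + μ^2*a11 + 3*μ^3) = 0 := by
    linear_combination (-1)*h34 + (-μ + μ*a12 + μ*a11 - μ^2*a12 - μ^2*a11 + μ^3)*h89
  have hP2 : (a11*a8 - μ - μ*a8 - μ*a12 + 2*μ*a11*a8 - μ^2 - 2*μ^2*a8 - μ^2*a12 + μ^2*a11 + 3*μ^3) = (0:ℝ) := (mul_eq_zero.mp key34).resolve_left pos1.ne'
  have key24 : (1-μ)*(-a5 + a12*a6 - μ*a5 + μ*a12*a6 - μ*a11 - μ*a11*a6 - μ^2 + 2*μ^2*a5 - μ^2*a6 + 2*μ^2*a12) = 0 := by linear_combination (-1)*h24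
  have hE24 : (-a5 + a12*a6 - μ*a5 + μ*a12*a6 - μ*a11 - μ*a11*a6 - μ^2 + 2*μ^2*a5 - μ^2*a6 + 2*μ^2*a12) = (0:ℝ) := (mul_eq_zero.mp key24).resolve_left pos1.ne'
  clear h22 h23 h33 h44 h34 h24 key22 key23 key33 key44 key34 key24 h22b hrank
  -- Step 4 : the main resultant identity
  have hw : (1 + 10*μ + 39*μ^2 + 68*μ^3 + 23*μ^4 - 102*μ^5 - 151*μ^6 - 40*μ^7 + 72*μ^8 + 64*μ^9 + 16*μ^10) * ((-1 + a12 - μ + μ*a12 + 4*μ^2)*(1 + a12 + μ + μ*a12 - 4*μ^2))^2 = 0 := by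
    linear_combination ((1+μ)^2*(-1 + a12^2 - 11*μ + 11*μ*a12^2 - 2*μ*a11 + 2*μ*a11*a12 - 37*μ^2 - 2*μ^2*a12 + 47*μ^2*a12^2 - 20*μ^2*a11 + 20*μ^2*a11*a12 + 13*μ^3 - 20*μ^3*a12 + 87*μ^3*a12^2 - 66*μ^3*a11 + 74*μ^3*a11*a12 + 329*μ^4 - 74*μ^4*a12 + 17*μ^4*a12^2 - 28*μ^4*a11 + 100*μ^4*a11*a12 + 471*μ^5 - 100*μ^5*a12 - 187*μ^5*a12^2 + 306*μ^5*a11 - 82*μ^5*a11*a12 - 783*μ^6 + 82*μ^6*a12 - 235*μ^6*a12^2 + 596*μ^6*a11 - 420*μ^6*a11*a12 - 2217*μ^7 + 420*μ^7*a12 + 37*μ^7*a12^2 - 70*μ^7*a11 - 434*μ^7*a11*a12 + 76*μ^8 + 434*μ^8*a12 + 226*μ^8*a12^2 - 1204*μ^8*a11 + 28*μ^8*a11*a12 + 3648*μ^9 - 28*μ^9*a12 + 84*μ^9*a12^2 - 936*μ^9*a11 + 376*μ^9*a11*a12 + 1568*μ^10 - 376*μ^10*a12 - 56*μ^10*a12^2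 + 400*μ^10*a11 + 272*μ^10*a11*a12 - 2160*μ^11 - 272*μ^11*a12 - 32*μ^11*a12^2 + 768*μ^11*a11 + 64*μ^11*a11*a12 - 1152*μ^12 - 64*μ^12*a12 + 256*μ^12*a11 + 256*μ^13))*hP1 + ((1+μ)^2*(-1 + a12^2 - 7*μ + 7*μ*a12^2 - 2*μ*a11 + 2*μ*a11*a12 - 12*μ^2 + 6*μ^2*a12 + 14*μ^2*a12^2 - 12*μ^2*a11 + 12*μ^2*a11*a12 + 22*μ^3 + 28*μ^3*a12 - 2*μ^3*a12^2 - 16*μ^3*a11 + 24*μ^3*a11*a12 + 87*μ^4 + 16*μ^4*a12 - 31*μ^4*a12^2 + 28*μ^4*a11 + 12*μ^4*a11*a12 + 29*μ^5 - 84*μ^5*a12 - 17*μ^5*a12^2 + 74*μ^5*a11 - 18*μ^5*a11*a12 - 162*μ^6 - 94*μ^6*a12 + 16*μ^6*a12^2 + 16*μ^6*a11 - 24*μ^6*a11*a12 - 140*μ^7 + 56*μ^7*a12 + 12*μ^7*a12^2 - 56*μ^7*a11 - 8*μ^7*a11*a12 + 88*μ^8 + 72*μ^8*a12 - 32*μ^8*a11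 + 96*μ^9)*(-2*a11*a8 - 2*μ + 2*μ*a8 - 2*μ*a12 - 8*μ*a11*a8 - 6*μ^2 + 8*μ^2*a8 - 6*μ^2*a12 + 2*μ^2*a11 - 8*μ^2*a11*a8 + 2*μ^3 + 8*μ^3*a8 - 4*μ^3*a12 + 4*μ^3*a11 + 12*μ^4))*hP2 + ((1+μ)^2*(-1 + a12^2 - 7*μ + 7*μ*a12^2 - 2*μ*a11 + 2*μ*a11*a12 - 12*μ^2 + 6*μ^2*a12 + 14*μ^2*a12^2 - 12*μ^2*a11 + 12*μ^2*a11*a12 + 22*μ^3 + 28*μ^3*a12 - 2*μ^3*a12^2 - 16*μ^3*a11 + 24*μ^3*a11*a12 + 87*μ^4 + 16*μ^4*a12 - 31*μ^4*a12^2 + 28*μ^4*a11 + 12*μ^4*a11*a12 + 29*μ^5 - 84*μ^5*a12 - 17*μ^5*a12^2 + 74*μ^5*a11 - 18*μ^5*a11*a12 - 162*μ^6 - 94*μ^6*a12 + 16*μ^6*a12^2 + 16*μ^6*a11 - 24*μ^6*a11*a12 - 140*μ^7 + 56*μ^7*a12 + 12*μ^7*a12^2 - 56*μ^7*a11 - 8*μ^7*a11*a12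 + 88*μ^8 + 72*μ^8*a12 - 32*μ^8*a11 + 96*μ^9)*(a11^2 - 2*μ*a11 + 4*μ*a11^2 + μ^2 - 8*μ^2*a11 + 4*μ^2*a11^2 + 4*μ^3 - 8*μ^3*a11 + 4*μ^4))*hP3
  have hHHp : ((-1 + a12 - μ + μ*a12 + 4*μ^2)*(1 + a12 + μ + μ*a12 - 4*μ^2))^2 = 0 := (mul_eq_zero.mp hw).resolve_left hw2pos.ne'
  have hHHp' : (-1 + a12 - μ + μ*a12 + 4*μ^2)*(1 + a12 + μ + μ*a12 - 4*μ^2) = 0 := pow_eq_zero_iff two_ne_zero |>.mp hHHp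
  -- in either case we deduce H = 0
  have hH : (-1 + a12 - μ + μ*a12 + 4*μ^2) = (0:ℝ) := by
    rcases mul_eq_zero.mp hHHp' with hHc | hHp
    · exact hHc
    · -- the degenerate branch : μ is the root of 4μ² − μ − 1 and a12 = 0
      have hlin : (a11 - μ)*((1+2*μ)*a8 + μ^2) = 0 := by
        linear_combination hP2 + μ*hHp
      have hb : (1+2*μ)*a8 + μ^2 = 0 := (mul_eq_zero.mp hlin).resolve_left hane
      have hmu : (4*μ^2-μ-1)*((1+μ)^2*(1+2*μ)) = 0 := by
        linear_combination ((1+2*μ)^2)*hP3 - (2*(1+2*μ)*((1+2*μ)*a8 - μ^2))*hb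
      have h4z : 4*μ^2-μ-1 = 0 := (mul_eq_zero.mp hmu).resolve_right pos4.ne'
      linear_combination hHp + 2*h4z
  -- Step 5 : conclusion via the (2,4) minor
  rw [eq_div_iff (by positivity : (2*μ) ≠ 0)]
  have keyF : ((1-μ)*(1+μ)*(1+2*μ))*(a11*(2*μ) - (1 - a5 + μ - a5*μ - 6*μ^2)) = 0 := by
    linear_combination (-(1+μ)^2)*hE24 + ((1+μ)*(a12 + μ*a12 - μ*a11 - μ^2))*ha6
      + (1+2*μ-μ^2-2*μ^3)*hH
  have hfin := (mul_eq_zero.mp keyF).resolve_left pos5.ne'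
  linarith [hfin]
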